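/- Continuous-time Halanay inequality: let a > b > 0 and τ > 0, and let x : [t₀ − τ, ∞) → [0,∞) be continuous and satisfy the upper right Dini derivative estimate D⁺x(t) ≤ −a·x(t) + b·sup_{s∈[t−τ,t]} x(s) for all t ≥ t₀. Then for any λ > 0 satisfying λ + b·exp(λτ) ≤ a, one has x(t) ≤ (sup_{s∈[t₀−τ,t₀]} x(s))·exp(−λ(t − t₀)) for all t ≥ t₀. -/

import Mathlib

open Filter Topology

/-- If the (real-valued) limsup of `f` along `F` is `< c` for some `c < 0`, then
`f` is eventually `≤ r` for some `r < c`. -/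
lemma halanay_limsup_aux {f : ℝ → ℝ} {F : Filter ℝ} {c : ℝ} (hc : c < 0)
    (h : Filter.limsup f F < c) : ∃ r, r < c ∧ ∀ᶠ y in F, f y ≤ r := by
  have hls : Filter.limsup f F = sInf {a | ∀ᶠ y in F, f y ≤ a} := Filter.limsup_eq
  rcases Set.eq_empty_or_nonempty {a | ∀ᶠ y in F, f y ≤ a} with hA | hA
  · rw [hls, hA, Real.sInf_empty] at h
    linarith
  · obtain ⟨r, hrA, hrc⟩ := exists_lt_of_csInf_lt hA (by rw [← hls]; exact h)
    exact ⟨r, hrc, hrA⟩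

/-- Continuous-time Halanay inequality: if `a > b > 0`, `τ > 0`, `x ≥ 0` is
continuous on `[t₀ − τ, ∞)` and its upper right Dini derivative satisfies
`D⁺x(t) ≤ −a·x(t) + b·sup_{s∈[t−τ,t]} x(s)` for all `t ≥ t₀`, then for any
`λ > 0` with `λ + b·exp(λτ) ≤ a` one has
`x(t) ≤ (sup_{s∈[t₀−τ,t₀]} x(s))·exp(−λ(t−t₀))` for all `t ≥ t₀`. -/
theorem halanay_continuous (a b τ t₀ : ℝ) (x : ℝ → ℝ)
    (hab : b < a) (hb : 0 < b) (hτ : 0 < τ)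
    (hx_nonneg : ∀ t, t₀ - τ ≤ t → 0 ≤ x t)
    (hx_cont : ContinuousOn x (Set.Ici (t₀ - τ)))
    (hdini : ∀ t, t₀ ≤ t →
      limsup (fun h : ℝ => (x (t + h) - x t) / h) (nhdsWithin 0 (Set.Ioi 0))
        ≤ -a * x t + b * sSup (x '' Set.Icc (t - τ) t))
    (lam : ℝ) (hlam : 0 < lam) (hlam_ineq : lam + b * Real.exp (lam * τ) ≤ a) :
    ∀ t, t₀ ≤ t →
      x t ≤ sSup (x '' Set.Icc (t₀ - τ) t₀) * Real.exp (-lam * (t - t₀)) := by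
  set M := sSup (x '' Set.Icc (t₀ - τ) t₀) with hM
  -- Basic facts about M
  have hbdd : BddAbove (x '' Set.Icc (t₀ - τ) t₀) :=
    (isCompact_Icc.image_of_continuousOn
      (hx_cont.mono (fun u hu => hu.1))).bddAbove
  have hMub : ∀ u ∈ Set.Icc (t₀ - τ) t₀, x u ≤ M :=
    fun u hu => le_csSup hbdd ⟨u, hu, rfl⟩
  have hxt₀M : x t₀ ≤ M := hMub t₀ ⟨by linarith, le_rfl⟩
  have hM0 : 0 ≤ M := le_trans (hx_nonneg t₀ (by linarith)) hxt₀M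
  -- Continuity of x at every point ≥ t₀
  have hx_at : ∀ t, t₀ ≤ t → ContinuousAt x t := fun t ht =>
    hx_cont.continuousAt (Ici_mem_nhds (by linarith))
  -- Key claim with margin ε and exponent μ < lam
  have key : ∀ ε : ℝ, 0 < ε → ∀ μ : ℝ, 0 < μ → μ < lam → ∀ t₁, t₀ ≤ t₁ →
      x t₁ ≤ (M + ε) * Real.exp (-μ * (t₁ - t₀)) := by
    intro ε hε μ hμ0 hμlam t₁ ht₁
    set w : ℝ → ℝ := fun u => (M + ε) * Real.exp (-μ * (u - t₀)) with hw
    have hwC : Continuous w := by fun_prop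
    have hMε : 0 < M + ε := by linarith
    set s : Set ℝ := {t | ∀ u, t₀ ≤ u → u ≤ t → x u ≤ w u} with hs
    have hbase : t₀ ∈ s := by
      intro u hu1 hu2
      have hu : u = t₀ := le_antisymm hu2 hu1
      subst hu
      have : w u = (M + ε) * Real.exp 0 := by simp [hw]
      rw [this, Real.exp_zero, mul_one]
      linarith
    -- closedness of s ∩ Icc t₀ t₁
    have hclosed : IsClosed (s ∩ Set.Icc t₀ t₁) := by
      apply isClosed_of_closure_subset
      intro t ht
      have htIcc : t ∈ Set.Icc t₀ t₁ :=
        isClosed_Icc.closure_subset (closure_mono Set.inter_subset_right ht)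
      refine ⟨?_, htIcc⟩
      have hlt : ∀ u, t₀ ≤ u → u < t → x u ≤ w u := by
        intro u hu1 hu2
        obtain ⟨v, hv, hvd⟩ := Metric.mem_closure_iff.mp ht (t - u) (by linarith)
        have huv : u < v := by
          have := abs_sub_lt_iff.mp (by simpa [Real.dist_eq] using hvd)
          linarith [this.1]
        exact hv.1 u hu1 huv.le
      intro u hu1 hu2
      rcases lt_or_eq_of_le hu2 with hlt' | heq
      · exact hlt u hu1 hlt'
      · rw [heq]
        rcases eq_or_lt_of_le hu1 with heq0 | ht0t
        · rw [← heq, ← heq0]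
          exact hbase t₀ le_rfl le_rfl
        · rw [← heq]
          have hcx : ContinuousAt x u := hx_at u ht0t.le
          have hten : Tendsto (fun v => w v - x v) (𝓝[<] u) (𝓝 (w u - x u)) :=
            ((hwC.continuousAt.sub hcx).mono_left nhdsWithin_le_nhds)
          have hev : ∀ᶠ v in 𝓝[<] u, 0 ≤ w v - x v := by
            filter_upwards [Ioo_mem_nhdsLT_of_mem (⟨ht0t, le_rfl⟩ : u ∈ Set.Ioc t₀ u)]
              with v hv
            exact sub_nonneg.2 (hlt v hv.1.le (heq ▸ hv.2))
          have := ge_of_tendsto hten hev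
          linarith
    -- extension step
    have hgt : ∀ t ∈ s ∩ Set.Ico t₀ t₁, s ∈ 𝓝[>] t := by
      intro t ⟨hts, ht0t, htt1⟩
      -- in both cases we produce: {u | x u < w u} ∈ 𝓝[>] t
      have hmain : {u : ℝ | x u < w u} ∈ 𝓝[>] t := by
        rcases lt_or_eq_of_le (hts t ht0t le_rfl) with hxlt | hxeq
        · have := ((hx_at t ht0t).eventually_lt hwC.continuousAt hxlt)
          exact nhdsWithin_le_nhds this
        · -- touching case: use the Dini derivative inequality
          set E := Real.exp (-μ * (t - t₀)) with hE
          have hEpos : 0 < E := Real.exp_pos _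
          -- bound on the delayed supremum
          have himg : (x '' Set.Icc (t - τ) t).Nonempty :=
            ⟨x t, ⟨t, ⟨by linarith, le_rfl⟩, rfl⟩⟩
          have hsup : sSup (x '' Set.Icc (t - τ) t) ≤ (M + ε) * Real.exp (μ * τ) * E := by
            apply csSup_le himg
            rintro _ ⟨u, hu, rfl⟩
            rcases le_total u t₀ with h1 | h1
            · have hx1 : x u ≤ M := hMub u ⟨by linarith [hu.1], h1⟩
              have h2 : (1 : ℝ) ≤ Real.exp (μ * τ) * E := by
                rw [hE, ← Real.exp_add]
                apply Real.one_le_exp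
                nlinarith [hu.1]
              nlinarith
            · have hx1 : x u ≤ w u := hts u h1 hu.2
              have h2 : Real.exp (-μ * (u - t₀)) ≤ Real.exp (μ * τ) * E := by
                rw [hE, ← Real.exp_add]
                apply Real.exp_le_exp.2
                nlinarith [hu.1]
              calc x u ≤ (M + ε) * Real.exp (-μ * (u - t₀)) := hx1
                _ ≤ (M + ε) * (Real.exp (μ * τ) * E) := by
                    exact mul_le_mul_of_nonneg_left h2 hMε.le
                _ = (M + ε) * Real.exp (μ * τ) * E := by ring
          -- the differential inequality at t
          have hD := hdini t ht0t
          have hwt : w t = (M + ε) * E := rfl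
          set c' := -μ * ((M + ε) * E) with hc'
          have hc'neg : c' < 0 := by
            have := mul_pos hμ0 (mul_pos hMε hEpos)
            rw [hc']; linarith
          have hDlt : (-a) * x t + b * sSup (x '' Set.Icc (t - τ) t) < c' := by
            rw [← hxeq] at hwt
            have hexp : Real.exp (μ * τ) < Real.exp (lam * τ) :=
              Real.exp_lt_exp.2 (by nlinarith)
            have hstep : -a + b * Real.exp (μ * τ) < -μ := by nlinarith
            calc (-a) * x t + b * sSup (x '' Set.Icc (t - τ) t)
                ≤ (-a) * ((M + ε) * E) + b * ((M + ε) * Real.exp (μ * τ) * E) := by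
                  rw [hwt]; nlinarith
              _ = ((M + ε) * E) * (-a + b * Real.exp (μ * τ)) := by ring
              _ < ((M + ε) * E) * (-μ) := by
                  exact mul_lt_mul_of_pos_left hstep (by positivity)
              _ = c' := by rw [hc']; ring
          have hlimlt : limsup (fun h : ℝ => (x (t + h) - x t) / h) (𝓝[>] (0:ℝ)) < c' :=
            lt_of_le_of_lt hD hDlt
          obtain ⟨r, hrc', hev⟩ := halanay_limsup_aux hc'neg hlimlt
          -- slope of w tends to c' from the right
          have hderiv : HasDerivAt w c' t := by
            have h1 : HasDerivAt (fun u : ℝ => -μ * (u - t₀)) (-μ) t := by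
              simpa using ((hasDerivAt_id t).sub_const t₀).const_mul (-μ)
            have h2 := (h1.exp).const_mul (M + ε)
            refine h2.congr_deriv ?_
            rw [hc', hE]; ring
          have hslope0 : Tendsto (slope w t) (𝓝[≠] t) (𝓝 c') :=
            hasDerivAt_iff_tendsto_slope.mp hderiv
          have hmap : Tendsto (fun h : ℝ => t + h) (𝓝[>] (0:ℝ)) (𝓝[≠] t) := by
            have h1 : Tendsto (fun h : ℝ => t + h) (𝓝[>] (0:ℝ)) (𝓝[>] t) := by
              apply tendsto_nhdsWithin_iff.mpr
              constructor
              · have h2 : Tendsto (fun h : ℝ => t + h) (𝓝 (0:ℝ)) (𝓝 (t + 0)) :=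
                  (continuous_const.add continuous_id).tendsto 0
                simpa using h2.mono_left nhdsWithin_le_nhds
              · filter_upwards [self_mem_nhdsWithin] with h hh
                exact Set.mem_Ioi.2 (by linarith [Set.mem_Ioi.1 hh])
            exact h1.mono_right (nhdsWithin_mono t (fun y hy => ne_of_gt hy))
          have hslope : Tendsto (fun h : ℝ => (w (t + h) - w t) / h) (𝓝[>] (0:ℝ)) (𝓝 c') := by
            have := hslope0.comp hmap
            apply this.congr'
            filter_upwards [self_mem_nhdsWithin] with h hh
            have hh0 : h ≠ 0 := ne_of_gt (Set.mem_Ioi.1 hh)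
            simp only [Function.comp_apply, slope_def_field]
            field_simp
            rw [add_sub_cancel_left]; field_simp
          have hev2 : ∀ᶠ h in 𝓝[>] (0:ℝ), r < (w (t + h) - w t) / h :=
            hslope.eventually (eventually_gt_nhds hrc')
          have hev3 : ∀ᶠ h in 𝓝[>] (0:ℝ), x (t + h) < w (t + h) := by
            filter_upwards [hev, hev2, self_mem_nhdsWithin] with h h1 h2 h3
            have hh0 : (0:ℝ) < h := Set.mem_Ioi.1 h3
            have : (x (t + h) - x t) / h < (w (t + h) - w t) / h := lt_of_le_of_lt h1 h2
            have := (div_lt_div_iff_of_pos_right hh0).mp this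
            linarith [hxeq.le, hxeq.ge]
          obtain ⟨δ, hδ, hsub⟩ := mem_nhdsGT_iff_exists_Ioo_subset.mp hev3
          apply mem_nhdsGT_iff_exists_Ioo_subset.mpr
          refine ⟨t + δ, by simpa using hδ, fun v hv => ?_⟩
          have : v - t ∈ Set.Ioo (0:ℝ) δ := ⟨by linarith [hv.1], by linarith [hv.2]⟩
          have := hsub this
          simpa using this
      -- from hmain, conclude s ∈ 𝓝[>] t
      obtain ⟨c, hc, hIoo⟩ := mem_nhdsGT_iff_exists_Ioo_subset.mp hmain
      apply mem_nhdsGT_iff_exists_Ioo_subset.mpr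
      refine ⟨c, hc, fun v hv => ?_⟩
      intro u hu1 hu2
      rcases le_or_gt u t with h1 | h1
      · exact hts u hu1 h1
      · exact (hIoo ⟨h1, lt_of_le_of_lt hu2 hv.2⟩).le
    have hsub := IsClosed.Icc_subset_of_forall_mem_nhdsWithin hclosed hbase hgt
    exact hsub ⟨ht₁, le_rfl⟩ t₁ ht₁ le_rfl
  -- now pass to the limit ε → 0, μ → lam
  intro t ht
  have h1 : ∀ μ : ℝ, 0 < μ → μ < lam → x t ≤ M * Real.exp (-μ * (t - t₀)) := by
    intro μ hμ0 hμl
    apply le_of_forall_pos_le_add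
    intro ε hε
    have h2 := key ε hε μ hμ0 hμl t ht
    have h3 : Real.exp (-μ * (t - t₀)) ≤ 1 := Real.exp_le_one_iff.mpr (by nlinarith)
    nlinarith [Real.exp_pos (-μ * (t - t₀))]
  have hten : Tendsto (fun μ : ℝ => M * Real.exp (-μ * (t - t₀))) (𝓝[<] lam)
      (𝓝 (M * Real.exp (-lam * (t - t₀)))) := by
    have : Continuous (fun μ : ℝ => M * Real.exp (-μ * (t - t₀))) := by fun_prop
    exact (this.tendsto lam).mono_left nhdsWithin_le_nhds
  have hev : ∀ᶠ μ in 𝓝[<] lam, x t ≤ M * Real.exp (-μ * (t - t₀)) := by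
    filter_upwards [Ioo_mem_nhdsLT_of_mem (⟨hlam, le_rfl⟩ : lam ∈ Set.Ioc 0 lam)]
      with μ hμ
    exact h1 μ hμ.1 hμ.2
  exact ge_of_tendsto hten hev
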